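/- Let β > 0 and x* ∈ Λ_A^β. Then: (a) for every nonnegative integer n < β there is a constant C_n (independent of x* and t) such that ‖(d/dt)^n T_t* x*‖_{X*} ≤ C_n ‖x*‖_{Λ_A^β} for all t > 0; (b) ‖x* − T_t* x*‖_{X*} → 0 as t → 0+. -/

import Mathlib

open Filter Topology MeasureTheory Set

noncomputable section

variable {X : Type*} [NormedAddCommGroup X] [NormedSpace ℂ X] [CompleteSpace X]

/-- The `n`-th derivative on `(0,∞)` of the orbit `t ↦ x* ∘ T t` of the dual semigroup. -/
def dualDeriv (T : ℝ → X →L[ℂ] X) (n : ℕ) (xs : X →L[ℂ] ℂ) (t : ℝ) : X →L[ℂ] ℂ :=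
  iteratedDerivWithin n (fun s => xs.comp (T s)) (Set.Ioi 0) t

/-- A uniformly bounded, strongly continuous holomorphic semigroup on `(0,∞)`,
together with the standard properties of its time derivatives. -/
structure IsHoloSG (T : ℝ → X →L[ℂ] X) : Prop where
  semigroup : ∀ s t : ℝ, 0 < s → 0 < t → T (s + t) = (T s).comp (T t)
  strong : ∀ x : X, Tendsto (fun t => T t x) (𝓝[>] (0:ℝ)) (𝓝 x)
  bounded : ∃ M : ℝ, ∀ t : ℝ, 0 < t → ‖T t‖ ≤ M
  smooth : ContDiffOn ℝ (⊤ : ℕ∞) T (Set.Ioi 0)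
  derivComp : ∀ n : ℕ, ∀ s t : ℝ, 0 < s → 0 < t →
    iteratedDerivWithin n T (Set.Ioi 0) (t + s)
      = (iteratedDerivWithin n T (Set.Ioi 0) t).comp (T s)
  derivBound : ∃ C : ℝ, 0 < C ∧ ∀ n : ℕ, 1 ≤ n → ∀ t : ℝ, 0 < t →
    ‖iteratedDerivWithin n T (Set.Ioi 0) t‖ ≤ C ^ n / t ^ n

/-- The smallest integer `> β` (for `β > 0`). -/
def mExp (β : ℝ) : ℕ := ⌊β⌋₊ + 1

/-- Membership in the Lipschitz space `Λ_A^β`. -/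
def MemLambda (T : ℝ → X →L[ℂ] X) (β : ℝ) (xs : X →L[ℂ] ℂ) : Prop :=
  ∃ C : ℝ, ∀ t : ℝ, 0 < t →
    ‖dualDeriv T (mExp β) xs t‖ ≤ C * t ^ (β - (mExp β : ℝ))

/-- The norm of the Lipschitz space `Λ_A^β`. -/
def lambdaNorm (T : ℝ → X →L[ℂ] X) (β : ℝ) (xs : X →L[ℂ] ℂ) : ℝ :=
  ‖xs‖ + ⨆ t : Set.Ioi (0:ℝ),
    (t : ℝ) ^ ((mExp β : ℝ) - β) * ‖dualDeriv T (mExp β) xs t‖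

section Aux

set_option linter.unusedSectionVars false

lemma uD' : UniqueDiffOn ℝ (Set.Ioi (0:ℝ)) := isOpen_Ioi.uniqueDiffOn

lemma hlt' (n : ℕ) : (n : WithTop ℕ∞) < ((⊤ : ℕ∞) : WithTop ℕ∞) := by
  exact_mod_cast ENat.coe_lt_top n

lemma contDiffOn_dual (T : ℝ → X →L[ℂ] X) (hsm : ContDiffOn ℝ (⊤ : ℕ∞) T (Set.Ioi 0))
    (xs : X →L[ℂ] ℂ) :
    ContDiffOn ℝ (⊤ : ℕ∞) (fun s => xs.comp (T s)) (Set.Ioi 0) :=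
  (((ContinuousLinearMap.compL ℂ X X ℂ xs).restrictScalars ℝ).contDiff).comp_contDiffOn hsm

lemma dualDeriv_eq (T : ℝ → X →L[ℂ] X) (hsm : ContDiffOn ℝ (⊤ : ℕ∞) T (Set.Ioi 0))
    (xs : X →L[ℂ] ℂ) (n : ℕ) :
    ∀ t ∈ Set.Ioi (0:ℝ), dualDeriv T n xs t = xs.comp (iteratedDerivWithin n T (Set.Ioi 0) t) := by
  induction n with
  | zero => intro t ht; simp [dualDeriv]
  | succ n ih =>
    intro t ht
    have hdT : DifferentiableWithinAt ℝ (iteratedDerivWithin n T (Set.Ioi 0)) (Set.Ioi 0) t :=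
      hsm.differentiableOn_iteratedDerivWithin (hlt' n) uD' t ht
    have h1 : HasDerivWithinAt (fun s => xs.comp (iteratedDerivWithin n T (Set.Ioi 0) s))
        (xs.comp (derivWithin (iteratedDerivWithin n T (Set.Ioi 0)) (Set.Ioi 0) t))
        (Set.Ioi 0) t := by
      have h2 := (hasDerivWithinAt_const t (Set.Ioi (0:ℝ))
        ((ContinuousLinearMap.compL ℂ X X ℂ xs).restrictScalars ℝ)).clm_apply
        hdT.hasDerivWithinAt
      simpa using h2
    have e1 : dualDeriv T (n+1) xs t
        = derivWithin (dualDeriv T n xs) (Set.Ioi 0) t := by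
      exact congrFun (iteratedDerivWithin_succ (f := fun s => xs.comp (T s)) (s := Set.Ioi 0) (n := n)) t
    rw [e1, derivWithin_congr (fun y hy => ih y hy) (ih t ht), h1.derivWithin (uD' t ht),
      ← iteratedDerivWithin_succ]

lemma hasDerivAt_dualDeriv (T : ℝ → X →L[ℂ] X) (hsm : ContDiffOn ℝ (⊤ : ℕ∞) T (Set.Ioi 0))
    (xs : X →L[ℂ] ℂ) (n : ℕ) {u : ℝ} (hu : 0 < u) :
    HasDerivAt (dualDeriv T n xs) (dualDeriv T (n+1) xs u) u := by
  have hF := contDiffOn_dual T hsm xs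
  have hdiff : DifferentiableWithinAt ℝ (dualDeriv T n xs) (Set.Ioi 0) u :=
    hF.differentiableOn_iteratedDerivWithin (hlt' n) uD' u hu
  have hda : DifferentiableAt ℝ (dualDeriv T n xs) u :=
    hdiff.differentiableAt (isOpen_Ioi.mem_nhds hu)
  have e1 : dualDeriv T (n+1) xs u = deriv (dualDeriv T n xs) u := by
    have := congrFun (iteratedDerivWithin_succ (f := fun s => xs.comp (T s)) (s := Set.Ioi 0)
      (n := n)) u
    rw [show dualDeriv T (n+1) xs u = _ from this,
      derivWithin_of_isOpen isOpen_Ioi hu]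
    rfl
  rw [e1]; exact hda.hasDerivAt

lemma continuousOn_dualDeriv (T : ℝ → X →L[ℂ] X) (hsm : ContDiffOn ℝ (⊤ : ℕ∞) T (Set.Ioi 0))
    (xs : X →L[ℂ] ℂ) (n : ℕ) :
    ContinuousOn (dualDeriv T n xs) (Set.Ioi 0) :=
  ((contDiffOn_dual T hsm xs).differentiableOn_iteratedDerivWithin (hlt' n) uD').continuousOn

lemma ftc_dualDeriv (T : ℝ → X →L[ℂ] X) (hsm : ContDiffOn ℝ (⊤ : ℕ∞) T (Set.Ioi 0))
    (xs : X →L[ℂ] ℂ) (n : ℕ) {a b : ℝ} (ha : 0 < a) (hab : a ≤ b) :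
    dualDeriv T n xs b - dualDeriv T n xs a = ∫ u in a..b, dualDeriv T (n+1) xs u := by
  have hsub : Set.uIcc a b ⊆ Set.Ioi 0 := by
    rw [Set.uIcc_of_le hab]
    exact fun u hu => lt_of_lt_of_le ha hu.1
  have hder : ∀ u ∈ Set.uIcc a b, HasDerivAt (dualDeriv T n xs) (dualDeriv T (n+1) xs u) u :=
    fun u hu => hasDerivAt_dualDeriv T hsm xs n (hsub hu)
  have hint : IntervalIntegrable (dualDeriv T (n+1) xs) volume a b :=
    ((continuousOn_dualDeriv T hsm xs (n+1)).mono hsub).intervalIntegrable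
  exact (intervalIntegral.integral_eq_sub_of_hasDerivAt hder hint).symm

lemma Jbound' {γ t : ℝ} (hγ0 : γ ≠ 0) (hγ1 : γ ≠ 1) (ht : 0 < t) (ht1 : t ≤ 1) :
    ∫ u in t..(1:ℝ), u ^ (min (γ - 1) 0) ≤ (1 + 1/|γ|) * t ^ (min γ 0) := by
  set r := min (γ - 1) 0 with hr
  have hne : r ≠ -1 := by
    rcases min_cases (γ - 1) 0 with ⟨h1, _⟩ | ⟨h1, _⟩ <;> rw [hr, h1] <;> intro h <;>
      [exact hγ0 (by linarith); norm_num at h]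
  have h0mem : (0:ℝ) ∉ Set.uIcc t 1 := by
    rw [Set.uIcc_of_le ht1]; exact fun h => absurd h.1 (not_le.mpr ht)
  have hval : ∫ u in t..(1:ℝ), u ^ r = (1 ^ (r+1) - t ^ (r+1)) / (r+1) :=
    integral_rpow (Or.inr ⟨hne, h0mem⟩)
  rw [hval, Real.one_rpow]
  have hK : (0:ℝ) < 1 + 1/|γ| := by positivity
  rcases lt_trichotomy γ 0 with hneg | hz | hpos
  · have hrv : r = γ - 1 := min_eq_left (by linarith)
    have h1 : r + 1 = γ := by rw [hrv]; ring
    rw [h1, min_eq_left hneg.le]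
    have htγ : (0:ℝ) < t ^ γ := Real.rpow_pos_of_pos ht γ
    have heq : (1 - t ^ γ) / γ = (t ^ γ - 1) / (-γ) := by
      rw [div_eq_div_iff hneg.ne (by linarith)]; ring
    rw [heq]
    have h2 : (t ^ γ - 1) / (-γ) ≤ t ^ γ / (-γ) := by
      gcongr <;> linarith
    calc (t ^ γ - 1) / (-γ) ≤ t ^ γ / (-γ) := h2
      _ = (1/|γ|) * t ^ γ := by rw [abs_of_neg hneg]; ring
      _ ≤ (1 + 1/|γ|) * t ^ γ := by nlinarith [htγ]
  · exact absurd hz hγ0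
  · rcases lt_trichotomy γ 1 with hlt1 | he1 | hgt1
    · have hrv : r = γ - 1 := min_eq_left (by linarith)
      have h1 : r + 1 = γ := by rw [hrv]; ring
      rw [h1, min_eq_right hpos.le, Real.rpow_zero, mul_one]
      have htγ : (0:ℝ) ≤ t ^ γ := (Real.rpow_pos_of_pos ht γ).le
      have h2 : (1 - t ^ γ) / γ ≤ 1 / γ := by
        gcongr <;> linarith
      calc (1 - t ^ γ) / γ ≤ 1/γ := h2
        _ = 1/|γ| := by rw [abs_of_pos hpos]
        _ ≤ 1 + 1/|γ| := by linarith [hK]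
    · exact absurd he1 hγ1
    · have hrv : r = 0 := min_eq_right (by linarith)
      rw [hrv, min_eq_right hpos.le, Real.rpow_zero, mul_one]
      have heq : (1 - t ^ (0+1:ℝ)) / (0+1) = 1 - t := by
        norm_num [Real.rpow_one]
      rw [heq]
      have : 0 < 1/|γ| := by positivity
      linarith

lemma mExp_gt {β : ℝ} (hβ : 0 < β) : β < (mExp β : ℝ) := by
  unfold mExp; push_cast; exact Nat.lt_floor_add_one β

lemma lambdaNorm_pieces (T : ℝ → X →L[ℂ] X) {β : ℝ} (xs : X →L[ℂ] ℂ)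
    (hxs : MemLambda T β xs) :
    ‖xs‖ ≤ lambdaNorm T β xs ∧ ∀ t : ℝ, 0 < t →
      ‖dualDeriv T (mExp β) xs t‖ ≤ lambdaNorm T β xs * t ^ (β - (mExp β:ℝ)) := by
  obtain ⟨c, hc⟩ := hxs
  set g : Set.Ioi (0:ℝ) → ℝ :=
    fun t => (t:ℝ) ^ ((mExp β:ℝ) - β) * ‖dualDeriv T (mExp β) xs t‖ with hg
  have hgle : ∀ u : Set.Ioi (0:ℝ), g u ≤ c := by
    rintro ⟨t, ht⟩
    have ht' : (0:ℝ) < t := ht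
    have h1 := hc t ht'
    calc g ⟨t,ht⟩ ≤ t ^ ((mExp β:ℝ) - β) * (c * t ^ (β - (mExp β:ℝ))) :=
          mul_le_mul_of_nonneg_left h1 (Real.rpow_nonneg ht'.le _)
      _ = c * (t ^ ((mExp β:ℝ) - β) * t ^ (β - (mExp β:ℝ))) := by ring
      _ = c := by rw [← Real.rpow_add ht']; norm_num
  have hbdd : BddAbove (Set.range g) := ⟨c, by rintro _ ⟨u, rfl⟩; exact hgle u⟩
  have hsup0 : 0 ≤ ⨆ u, g u := Real.iSup_nonneg fun ⟨t, ht⟩ => by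
    have ht' : (0:ℝ) < t := ht
    positivity
  have hlam : lambdaNorm T β xs = ‖xs‖ + ⨆ u, g u := rfl
  constructor
  · rw [hlam]; linarith
  · intro t ht
    have h1 : g ⟨t, ht⟩ ≤ ⨆ u, g u := le_ciSup hbdd ⟨t, ht⟩
    have h2 : (⨆ u, g u) ≤ lambdaNorm T β xs := by
      rw [hlam]; linarith [norm_nonneg xs]
    have h3 : ‖dualDeriv T (mExp β) xs t‖
        = t ^ (β - (mExp β:ℝ)) * g ⟨t, ht⟩ := by
      show _ = t ^ (β - (mExp β:ℝ)) * (t ^ ((mExp β:ℝ) - β) * _)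
      rw [← mul_assoc, ← Real.rpow_add ht]; norm_num
    rw [h3, mul_comm (lambdaNorm T β xs)]
    exact mul_le_mul_of_nonneg_left (h1.trans h2) (Real.rpow_nonneg ht.le _)

lemma keyInduction (T : ℝ → X →L[ℂ] X) (hT : IsHoloSG T) {β : ℝ} (hβ : 0 < β)
    {β' : ℝ} (hβ'0 : 0 < β') (hβ'β : β' < β) (hni : ∀ j : ℕ, (j:ℝ) ≠ β') :
    ∀ d n : ℕ, n + d = mExp β → ∃ C : ℝ, 0 ≤ C ∧ ∀ xs : X →L[ℂ] ℂ, MemLambda T β xs →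
      ∀ t : ℝ, 0 < t → t ≤ 1 →
      ‖dualDeriv T n xs t‖ ≤ C * lambdaNorm T β xs * t ^ (min (β' - (n:ℝ)) 0) := by
  intro d
  induction d with
  | zero =>
    intro n hn
    refine ⟨1, zero_le_one, ?_⟩
    intro xs hxs t ht ht1
    have hn' : n = mExp β := by omega
    subst hn'
    obtain ⟨hL1, hL2⟩ := lambdaNorm_pieces T xs hxs
    have hL0 : 0 ≤ lambdaNorm T β xs := le_trans (norm_nonneg xs) hL1
    have hm := mExp_gt hβ
    have h2 : t ^ (β - (mExp β:ℝ)) ≤ t ^ (min (β' - (mExp β:ℝ)) 0) := by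
      apply Real.rpow_le_rpow_of_exponent_ge ht ht1
      have h3 : min (β' - (mExp β:ℝ)) 0 ≤ β' - (mExp β:ℝ) := min_le_left _ _
      linarith
    calc ‖dualDeriv T (mExp β) xs t‖ ≤ lambdaNorm T β xs * t ^ (β - (mExp β:ℝ)) := hL2 t ht
      _ ≤ lambdaNorm T β xs * t ^ (min (β' - (mExp β:ℝ)) 0) :=
          mul_le_mul_of_nonneg_left h2 hL0
      _ = 1 * lambdaNorm T β xs * t ^ (min (β' - (mExp β:ℝ)) 0) := by ring
  | succ d ih =>
    intro n hn
    obtain ⟨C', hC'0, hIH⟩ := ih (n+1) (by omega)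
    set γ : ℝ := β' - (n:ℝ) with hγ
    have hγ0 : γ ≠ 0 := fun h => hni n (by simp [hγ] at h; linarith)
    have hγ1 : γ ≠ 1 := fun h => hni (n+1) (by push_cast; simp [hγ] at h ⊢; linarith)
    set Dn1 : ℝ := ‖iteratedDerivWithin n T (Set.Ioi 0) 1‖ with hDn1
    have hDn10 : 0 ≤ Dn1 := norm_nonneg _
    refine ⟨Dn1 + C' * (1 + 1/|γ|), by positivity, ?_⟩
    intro xs hxs t ht ht1
    obtain ⟨hL1, _⟩ := lambdaNorm_pieces T xs hxs
    set L := lambdaNorm T β xs with hLdef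
    have hL0 : 0 ≤ L := le_trans (norm_nonneg xs) hL1
    have hfn1 : ‖dualDeriv T n xs 1‖ ≤ Dn1 * L := by
      rw [dualDeriv_eq T hT.smooth xs n 1 (by norm_num)]
      calc ‖xs.comp (iteratedDerivWithin n T (Set.Ioi 0) 1)‖ ≤ ‖xs‖ * Dn1 :=
            ContinuousLinearMap.opNorm_comp_le _ _
        _ ≤ L * Dn1 := mul_le_mul_of_nonneg_right hL1 hDn10
        _ = Dn1 * L := mul_comm _ _
    have hftc := ftc_dualDeriv T hT.smooth xs n ht ht1
    have hminrw : min (β' - ((n:ℝ)+1)) 0 = min (γ - 1) 0 := by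
      rw [hγ]; ring_nf
    have hptw : ∀ u ∈ Set.Ioc t 1, ‖dualDeriv T (n+1) xs u‖
        ≤ (C' * L) * u ^ (min (γ - 1) 0) := by
      intro u hu
      have := hIH xs hxs u (lt_trans ht hu.1) hu.2
      push_cast at this
      rw [hminrw] at this
      rw [mul_assoc] at this ⊢
      exact this
    have hcont : ContinuousOn (fun u : ℝ => (C' * L) * u ^ (min (γ - 1) 0))
        (Set.uIcc t 1) := by
      apply continuousOn_const.mul
      intro u hu
      rw [Set.uIcc_of_le ht1] at hu
      exact (Real.continuousAt_rpow_const u _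
        (Or.inl (lt_of_lt_of_le ht hu.1).ne')).continuousWithinAt
    have hInt0 : 0 ≤ ∫ u in t..1, (C' * L) * u ^ (min (γ - 1) 0) := by
      apply intervalIntegral.integral_nonneg ht1
      intro u hu
      have hu0 : (0:ℝ) < u := lt_of_lt_of_le ht hu.1
      positivity
    have hIntLe : ‖∫ u in t..1, dualDeriv T (n+1) xs u‖
        ≤ ∫ u in t..1, (C' * L) * u ^ (min (γ - 1) 0) := by
      have h1 : ‖∫ u in t..1, dualDeriv T (n+1) xs u‖
          ≤ |∫ u in t..1, (C' * L) * u ^ (min (γ - 1) 0)| := by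
        apply intervalIntegral.norm_integral_le_abs_of_norm_le
        · rw [Set.uIoc_of_le ht1]
          exact (ae_restrict_iff' measurableSet_Ioc).mpr (ae_of_all _ hptw)
        · exact hcont.intervalIntegrable
      rwa [abs_of_nonneg hInt0] at h1
    have hIntVal : ∫ u in t..1, (C' * L) * u ^ (min (γ - 1) 0)
        = (C' * L) * ∫ u in t..1, u ^ (min (γ - 1) 0) :=
      intervalIntegral.integral_const_mul _ _
    have hJ := Jbound' hγ0 hγ1 ht ht1
    have hte : (1:ℝ) ≤ t ^ (min γ 0) :=
      Real.one_le_rpow_of_pos_of_le_one_of_nonpos ht ht1 (min_le_right _ 0)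
    have hte0 : (0:ℝ) < t ^ (min γ 0) := Real.rpow_pos_of_pos ht _
    have hsplit : ‖dualDeriv T n xs t‖
        ≤ ‖dualDeriv T n xs 1‖ + ‖dualDeriv T n xs 1 - dualDeriv T n xs t‖ := by
      have h := norm_sub_le (dualDeriv T n xs 1) (dualDeriv T n xs 1 - dualDeriv T n xs t)
      simpa only [sub_sub_cancel] using h
    have hK0 : (0:ℝ) < 1 + 1/|γ| := by positivity
    have hchain : ‖dualDeriv T n xs 1 - dualDeriv T n xs t‖
        ≤ (C' * L) * ((1 + 1/|γ|) * t ^ (min γ 0)) := by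
      rw [hftc]
      calc ‖∫ u in t..1, dualDeriv T (n+1) xs u‖
          ≤ (C' * L) * ∫ u in t..1, u ^ (min (γ - 1) 0) := hIntLe.trans_eq hIntVal
        _ ≤ (C' * L) * ((1 + 1/|γ|) * t ^ (min γ 0)) :=
            mul_le_mul_of_nonneg_left hJ (by positivity)
    have hgoal : min (β' - (n:ℝ)) 0 = min γ 0 := rfl
    rw [hgoal]
    calc ‖dualDeriv T n xs t‖
        ≤ ‖dualDeriv T n xs 1‖ + ‖dualDeriv T n xs 1 - dualDeriv T n xs t‖ := hsplit
      _ ≤ Dn1 * L + (C' * L) * ((1 + 1/|γ|) * t ^ (min γ 0)) :=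
          add_le_add hfn1 hchain
      _ ≤ Dn1 * L * t ^ (min γ 0) + (C' * L) * ((1 + 1/|γ|) * t ^ (min γ 0)) := by
          nlinarith [mul_nonneg hDn10 hL0]
      _ = (Dn1 + C' * (1 + 1/|γ|)) * L * t ^ (min γ 0) := by ring

end Aux

/-- if `x* ∈ Λ_A^β` then (a) for every integer `0 ≤ k < β` one has
`‖(d/dt)^k T_t* x*‖ ≤ C_k ‖x*‖_{Λ_A^β}` with `C_k` independent of `x*` and `t`,
and (b) `‖x* − T_t* x*‖ → 0` as `t → 0+`. -/
theorem stmt3 (T : ℝ → X →L[ℂ] X) (hT : IsHoloSG T) (β : ℝ) (hβ : 0 < β) :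
    (∀ k : ℕ, (k : ℝ) < β → ∃ C : ℝ, ∀ xs : X →L[ℂ] ℂ, MemLambda T β xs →
      ∀ t : ℝ, 0 < t → ‖dualDeriv T k xs t‖ ≤ C * lambdaNorm T β xs) ∧
    (∀ xs : X →L[ℂ] ℂ, MemLambda T β xs →
      Tendsto (fun t : ℝ => ‖xs - xs.comp (T t)‖) (𝓝[>] (0:ℝ)) (𝓝 0)) := by
  obtain ⟨M, hM⟩ := hT.bounded
  obtain ⟨C0, hC0pos, hCd⟩ := hT.derivBound
  have hM0 : 0 ≤ M := le_trans (norm_nonneg (T 1)) (hM 1 one_pos)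
  have hm := mExp_gt hβ
  constructor
  · -- part (a)
    intro k hk
    set δ : ℝ := min (β - k) 1 / 2 with hδdef
    have hδ0 : 0 < δ := by
      have : 0 < min (β - (k:ℝ)) 1 := lt_min (by linarith) one_pos
      positivity
    have hδ2 : δ ≤ 1/2 := by
      have : min (β - (k:ℝ)) 1 ≤ 1 := min_le_right _ _
      rw [hδdef]; linarith
    set β' : ℝ := k + δ with hβ'def
    have hβ'0 : 0 < β' := by positivity
    have hβ'k : (k:ℝ) < β' := by rw [hβ'def]; linarith
    have hβ'β : β' < β := by
      have h1 : min (β - (k:ℝ)) 1 ≤ β - k := min_le_left _ _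
      have h2 : 0 < min (β - (k:ℝ)) 1 := lt_min (by linarith) one_pos
      rw [hβ'def, hδdef]; linarith
    have hni : ∀ j : ℕ, (j:ℝ) ≠ β' := by
      intro j h
      rcases le_or_gt j k with hj | hj
      · have : (j:ℝ) ≤ (k:ℝ) := Nat.cast_le.mpr hj
        linarith
      · have : (k:ℝ) + 1 ≤ (j:ℝ) := by exact_mod_cast hj
        rw [hβ'def] at h; linarith
    have hkm : k ≤ mExp β := by
      have : (k:ℝ) < (mExp β : ℝ) := lt_trans hk hm
      exact_mod_cast this.le
    obtain ⟨C1, hC10, hkey⟩ := keyInduction T hT hβ hβ'0 hβ'β hni (mExp β - k) k (by omega)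
    refine ⟨max C1 (max M (C0 ^ k)), ?_⟩
    intro xs hxs t ht
    obtain ⟨hL1, _⟩ := lambdaNorm_pieces T xs hxs
    set L := lambdaNorm T β xs with hLdef
    have hL0 : 0 ≤ L := le_trans (norm_nonneg xs) hL1
    rcases le_or_gt t 1 with h1 | h1
    · have h2 := hkey xs hxs t ht h1
      have hmin : min (β' - (k:ℝ)) 0 = 0 := min_eq_right (by linarith)
      rw [hmin, Real.rpow_zero, mul_one] at h2
      calc ‖dualDeriv T k xs t‖ ≤ C1 * L := h2
        _ ≤ max C1 (max M (C0 ^ k)) * L :=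
            mul_le_mul_of_nonneg_right (le_max_left _ _) hL0
    · have hB : ‖dualDeriv T k xs t‖ ≤ ‖xs‖ * max M (C0 ^ k) := by
        rcases Nat.eq_zero_or_pos k with hk0 | hk1
        · subst hk0
          have he : dualDeriv T 0 xs t = xs.comp (T t) := by simp [dualDeriv]
          rw [he]
          calc ‖xs.comp (T t)‖ ≤ ‖xs‖ * ‖T t‖ := ContinuousLinearMap.opNorm_comp_le _ _
            _ ≤ ‖xs‖ * M := mul_le_mul_of_nonneg_left (hM t ht) (norm_nonneg xs)
            _ ≤ ‖xs‖ * max M (C0 ^ 0) :=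
                mul_le_mul_of_nonneg_left (le_max_left _ _) (norm_nonneg xs)
        · rw [dualDeriv_eq T hT.smooth xs k t ht]
          have h3 : ‖iteratedDerivWithin k T (Set.Ioi 0) t‖ ≤ C0 ^ k / t ^ k :=
            hCd k hk1 t ht
          have h4 : C0 ^ k / t ^ k ≤ C0 ^ k := by
            apply div_le_self (by positivity)
            exact one_le_pow₀ h1.le
          calc ‖xs.comp (iteratedDerivWithin k T (Set.Ioi 0) t)‖
              ≤ ‖xs‖ * ‖iteratedDerivWithin k T (Set.Ioi 0) t‖ :=
                ContinuousLinearMap.opNorm_comp_le _ _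
            _ ≤ ‖xs‖ * (C0 ^ k) :=
                mul_le_mul_of_nonneg_left (h3.trans h4) (norm_nonneg xs)
            _ ≤ ‖xs‖ * max M (C0 ^ k) :=
                mul_le_mul_of_nonneg_left (le_max_right _ _) (norm_nonneg xs)
      calc ‖dualDeriv T k xs t‖ ≤ ‖xs‖ * max M (C0 ^ k) := hB
        _ ≤ L * max M (C0 ^ k) :=
            mul_le_mul_of_nonneg_right hL1 (le_trans hM0 (le_max_left _ _))
        _ = max M (C0 ^ k) * L := mul_comm _ _
        _ ≤ max C1 (max M (C0 ^ k)) * L :=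
            mul_le_mul_of_nonneg_right (le_max_right _ _) hL0
  · -- part (b)
    intro xs hxs
    set β' : ℝ := min β 1 / 2 with hβ'def
    have hmin0 : 0 < min β 1 := lt_min hβ one_pos
    have hβ'0 : 0 < β' := by positivity
    have hβ'h : β' ≤ 1/2 := by
      have : min β 1 ≤ 1 := min_le_right _ _
      rw [hβ'def]; linarith
    have hβ'β : β' < β := by
      have h1 : min β 1 ≤ β := min_le_left _ _
      rw [hβ'def]; linarith
    have hni : ∀ j : ℕ, (j:ℝ) ≠ β' := by
      intro j h
      rcases Nat.eq_zero_or_pos j with hj | hj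
      · subst hj; simp at h; linarith
      · have : (1:ℝ) ≤ (j:ℝ) := by exact_mod_cast hj
        linarith
    have h1m : 1 ≤ mExp β := by unfold mExp; omega
    obtain ⟨C1, hC10, hkey⟩ := keyInduction T hT hβ hβ'0 hβ'β hni (mExp β - 1) 1 (by omega)
    obtain ⟨hL1, _⟩ := lambdaNorm_pieces T xs hxs
    set L := lambdaNorm T β xs with hLdef
    have hL0 : 0 ≤ L := le_trans (norm_nonneg xs) hL1
    set K : ℝ := C1 * L / β' with hKdef
    have hK0 : 0 ≤ K := by positivity
    have hmin1 : min (β' - ((1:ℕ):ℝ)) 0 = β' - 1 := by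
      have : β' - ((1:ℕ):ℝ) = β' - 1 := by push_cast; ring
      rw [this]
      exact min_eq_left (by linarith)
    -- operator bound for t close to 0
    have hop : ∀ t : ℝ, 0 < t → t ≤ 1 →
        ‖xs - xs.comp (T t)‖ ≤ K * t ^ β' := by
      intro t ht ht1
      -- uniform bound on differences
      have hdiff : ∀ s : ℝ, 0 < s → s ≤ t →
          ‖dualDeriv T 0 xs t - dualDeriv T 0 xs s‖ ≤ K * t ^ β' := by
        intro s hs hst
        have hftc := ftc_dualDeriv T hT.smooth xs 0 hs hst
        have hptw : ∀ u ∈ Set.Ioc s t, ‖dualDeriv T 1 xs u‖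
            ≤ (C1 * L) * u ^ (β' - 1) := by
          intro u hu
          have h2 := hkey xs hxs u (lt_trans hs hu.1) (le_trans hu.2 ht1)
          rw [hmin1] at h2
          rw [mul_assoc] at h2 ⊢
          exact h2
        have hcont : ContinuousOn (fun u : ℝ => (C1 * L) * u ^ (β' - 1))
            (Set.uIcc s t) := by
          apply continuousOn_const.mul
          intro u hu
          rw [Set.uIcc_of_le hst] at hu
          exact (Real.continuousAt_rpow_const u _
            (Or.inl (lt_of_lt_of_le hs hu.1).ne')).continuousWithinAt
        have hInt0 : 0 ≤ ∫ u in s..t, (C1 * L) * u ^ (β' - 1) := by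
          apply intervalIntegral.integral_nonneg hst
          intro u hu
          have hu0 : (0:ℝ) < u := lt_of_lt_of_le hs hu.1
          positivity
        have hIntLe : ‖∫ u in s..t, dualDeriv T 1 xs u‖
            ≤ ∫ u in s..t, (C1 * L) * u ^ (β' - 1) := by
          have h3 : ‖∫ u in s..t, dualDeriv T 1 xs u‖
              ≤ |∫ u in s..t, (C1 * L) * u ^ (β' - 1)| := by
            apply intervalIntegral.norm_integral_le_abs_of_norm_le
            · rw [Set.uIoc_of_le hst]
              exact (ae_restrict_iff' measurableSet_Ioc).mpr (ae_of_all _ hptw)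
            · exact hcont.intervalIntegrable
          rwa [abs_of_nonneg hInt0] at h3
        have h0mem : (0:ℝ) ∉ Set.uIcc s t := by
          rw [Set.uIcc_of_le hst]; exact fun h => absurd h.1 (not_le.mpr hs)
        have hval : ∫ u in s..t, u ^ (β' - 1) = (t ^ β' - s ^ β') / β' := by
          rw [integral_rpow (Or.inr ⟨by intro h; rw [sub_eq_iff_eq_add] at h; norm_num at h; linarith, h0mem⟩)]
          norm_num
        have hIntVal : ∫ u in s..t, (C1 * L) * u ^ (β' - 1)
            = (C1 * L) * ((t ^ β' - s ^ β') / β') := by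
          rw [intervalIntegral.integral_const_mul, hval]
        have hsβ : (0:ℝ) < s ^ β' := Real.rpow_pos_of_pos hs _
        have h4 : (C1 * L) * ((t ^ β' - s ^ β') / β') ≤ K * t ^ β' := by
          have hKt : K * t ^ β' = (C1 * L) * (t ^ β' / β') := by rw [hKdef]; ring
          rw [hKt]
          have h5 : (t ^ β' - s ^ β') / β' ≤ t ^ β' / β' := by
            gcongr <;> linarith [hsβ]
          exact mul_le_mul_of_nonneg_left h5 (by positivity)
        rw [hftc]
        exact (hIntLe.trans_eq hIntVal).trans h4
      -- pass to the limit s → 0+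
      have hKt0 : 0 ≤ K * t ^ β' := by positivity
      apply ContinuousLinearMap.opNorm_le_bound _ hKt0
      intro x
      have htendx : Tendsto (fun s : ℝ => ‖xs (T t x) - xs (T s x)‖)
          (𝓝[>] (0:ℝ)) (𝓝 ‖xs (T t x) - xs x‖) := by
        have h5 : Tendsto (fun s : ℝ => xs (T s x)) (𝓝[>] (0:ℝ)) (𝓝 (xs x)) :=
          (xs.continuous.tendsto x).comp (hT.strong x)
        exact (tendsto_const_nhds.sub h5).norm
      have hev : ∀ᶠ s in 𝓝[>] (0:ℝ),
          ‖xs (T t x) - xs (T s x)‖ ≤ K * t ^ β' * ‖x‖ := by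
        filter_upwards [Ioc_mem_nhdsGT_of_mem ⟨le_refl (0:ℝ), ht⟩] with s hs
        have h6 := hdiff s hs.1 hs.2
        have h7 : xs (T t x) - xs (T s x)
            = (dualDeriv T 0 xs t - dualDeriv T 0 xs s) x := by
          simp [dualDeriv]
        rw [h7]
        calc ‖(dualDeriv T 0 xs t - dualDeriv T 0 xs s) x‖
            ≤ ‖dualDeriv T 0 xs t - dualDeriv T 0 xs s‖ * ‖x‖ :=
              ContinuousLinearMap.le_opNorm _ _
          _ ≤ K * t ^ β' * ‖x‖ := mul_le_mul_of_nonneg_right h6 (norm_nonneg x)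
      have h8 : ‖xs (T t x) - xs x‖ ≤ K * t ^ β' * ‖x‖ :=
        le_of_tendsto htendx hev
      have h9 : (xs - xs.comp (T t)) x = xs x - xs (T t x) := by simp
      rw [h9, ← norm_neg]
      simpa using h8
    -- conclude with a squeeze
    have htend : Tendsto (fun t : ℝ => K * t ^ β') (𝓝[>] (0:ℝ)) (𝓝 0) := by
      have h10 : Tendsto (fun t : ℝ => t ^ β') (𝓝[>] (0:ℝ)) (𝓝 ((0:ℝ) ^ β')) :=
        ((Real.continuousAt_rpow_const 0 β' (Or.inr hβ'0.le)).tendsto).mono_left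
          nhdsWithin_le_nhds
      rw [Real.zero_rpow hβ'0.ne'] at h10
      have := h10.const_mul K
      simpa using this
    apply squeeze_zero' ?_ ?_ htend
    · filter_upwards with t using norm_nonneg _
    · filter_upwards [Ioc_mem_nhdsGT_of_mem ⟨le_refl (0:ℝ), one_pos⟩] with t htt
      exact hop t htt.1 htt.2
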